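/- Let A, B be unital C*-algebras, H a complex Hilbert space, ι : B → B(H) an isometric *-homomorphism, and suppose there exists a completely positive map P : B(H) → B with P(ι(b)) = b for all b ∈ B (a completely positive conditional expectation onto the image of B). Then for all completely positive maps T1, T2 : A → B, β(T1, T2) = β(ι∘T1, ι∘T2). -/

import Mathlib

noncomputable section

/-- A map between star algebras is *completely positive* if, for every `n`, its
entrywise application to `n × n` matrices maps positive elements (i.e. elements of the form
`star y * y`) to positive elements. -/
def IsCPMap {A B : Type*} [NonUnitalSemiring A] [StarRing A]
    [NonUnitalSemiring B] [StarRing B] (T : A → B) : Prop :=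
  ∀ (n : ℕ) (x : Matrix (Fin n) (Fin n) A),
    (∃ y : Matrix (Fin n) (Fin n) A, x = star y * y) →
      ∃ z : Matrix (Fin n) (Fin n) B, x.map T = star z * z

/-- `That : A → M₂(B)` is a cp extension of the pair `(T₁, T₂)`: it is completely positive
and its diagonal entries are `T₁` and `T₂`. -/
def IsCPExtension {A B : Type*} [CStarAlgebra A] [CStarAlgebra B]
    (T₁ T₂ : A → B) (That : A →ₗ[ℂ] Matrix (Fin 2) (Fin 2) B) : Prop :=
  IsCPMap That ∧ (∀ a : A, That a 0 0 = T₁ a) ∧ (∀ a : A, That a 1 1 = T₂ a)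

/-- The Bures distance between two completely positive maps `T₁ T₂ : A → B`:
`β(T₁,T₂) = √ inf { ‖T₁ 1 + T₂ 1 - T̂₁₂ 1 - T̂₂₁ 1‖ | T̂ a cp extension of (T₁, T₂) }`. -/
noncomputable def buresDist {A B : Type*} [CStarAlgebra A] [CStarAlgebra B]
    (T₁ T₂ : A → B) : ℝ :=
  Real.sqrt (sInf { r : ℝ | ∃ That : A →ₗ[ℂ] Matrix (Fin 2) (Fin 2) B,
    IsCPExtension T₁ T₂ That ∧ r = ‖T₁ 1 + T₂ 1 - That 1 0 1 - That 1 1 0‖ })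


/-! ### Auxiliary lemmas -/

lemma IsCPMap.exists_star_mul_self' {R S : Type*} [NonUnitalSemiring R] [StarRing R]
    [NonUnitalSemiring S] [StarRing S] {T : R → S} (hT : IsCPMap T) {x : R} (y : R)
    (hx : x = star y * y) : ∃ z : S, T x = star z * z := by
  obtain ⟨Z, hZ⟩ := hT 1 (Matrix.of fun _ _ => x)
    ⟨Matrix.of fun _ _ => y, by ext i j; simp [Matrix.mul_apply, hx, Matrix.star_apply]⟩
  refine ⟨Z 0 0, ?_⟩
  have h := congrFun (congrFun hZ 0) 0
  simpa [Matrix.mul_apply, Matrix.star_apply] using h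

lemma IsCPMap.star_apply_self' {R S : Type*} [NonUnitalSemiring R] [StarRing R]
    [NonUnitalSemiring S] [StarRing S] {T : R → S} (hT : IsCPMap T) {x : R} (y : R)
    (hx : x = star y * y) : star (T x) = T x := by
  obtain ⟨z, hz⟩ := hT.exists_star_mul_self' y hx
  simp [hz, star_mul]

lemma IsCPMap.apply_nonneg' {R S : Type*} [NonUnitalSemiring R] [StarRing R]
    [NonUnitalSemiring S] [StarRing S] [PartialOrder S] [StarOrderedRing S]
    {T : R → S} (hT : IsCPMap T) {x : R} (y : R)
    (hx : x = star y * y) : 0 ≤ T x := by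
  obtain ⟨z, hz⟩ := hT.exists_star_mul_self' y hx
  simp only [hz]
  exact star_mul_self_nonneg z

lemma IsCPMap.mapHom' {A B C : Type*} [NonUnitalSemiring A] [StarRing A]
    [Semiring B] [StarRing B] [Semiring C] [StarRing C]
    (f : B →+* C) (hf : ∀ b, f (star b) = star (f b))
    {T : A → Matrix (Fin 2) (Fin 2) B} (hT : IsCPMap T) :
    IsCPMap (fun a => (T a).map f) := by
  intro n x hx
  obtain ⟨z, hz⟩ := hT n x hx
  refine ⟨z.map (fun M => M.map f), ?_⟩
  have hxz : x.map (fun a => (T a).map f) = (x.map T).map (fun M => M.map f) := rfl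
  rw [hxz, hz]
  ext i j p q
  simp only [Matrix.map_apply, Matrix.mul_apply, Matrix.star_apply,
    Matrix.conjTranspose_apply, Finset.sum_apply, Matrix.sum_apply, map_sum, map_mul, hf]

private lemma sum_flatten {M : Type*} [AddCommMonoid M] {n : ℕ} (g : Fin n → Fin 2 → M) :
    ∑ k : Fin n, ∑ s : Fin 2, g k s
      = ∑ l : Fin (n * 2), g (finProdFinEquiv.symm l).1 (finProdFinEquiv.symm l).2 := by
  have h1 : ∑ p : Fin n × Fin 2, g p.1 p.2 = ∑ k : Fin n, ∑ s : Fin 2, g k s :=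
    Fintype.sum_prod_type _
  rw [← h1]
  exact (Fintype.sum_equiv finProdFinEquiv.symm _ _ fun l => rfl).symm

private lemma sum_flatten' {M : Type*} [AddCommMonoid M] {n : ℕ} (g : Fin (n * 2) → M) :
    ∑ k : Fin n, ∑ s : Fin 2, g (finProdFinEquiv (k, s)) = ∑ l : Fin (n * 2), g l := by
  have h1 : ∑ p : Fin n × Fin 2, g (finProdFinEquiv p)
      = ∑ k : Fin n, ∑ s : Fin 2, g (finProdFinEquiv (k, s)) := Fintype.sum_prod_type _
  rw [← h1]
  exact Equiv.sum_comp finProdFinEquiv g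

lemma IsCPMap.mapCP' {A R S : Type*} [NonUnitalSemiring A] [StarRing A]
    [Semiring R] [StarRing R] [Semiring S] [StarRing S]
    (P : R → S) (hP : IsCPMap P)
    {T : A → Matrix (Fin 2) (Fin 2) R} (hT : IsCPMap T) :
    IsCPMap (fun a => (T a).map P) := by
  intro n x hx
  obtain ⟨z, hz⟩ := hT n x hx
  set e : Fin n × Fin 2 ≃ Fin (n * 2) := finProdFinEquiv with he
  let F : Matrix (Fin n) (Fin n) (Matrix (Fin 2) (Fin 2) R) →
      Matrix (Fin (n * 2)) (Fin (n * 2)) R :=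
    fun M => Matrix.of fun a b => M (e.symm a).1 (e.symm b).1 (e.symm a).2 (e.symm b).2
  have hFmul : F (star z * z) = star (F z) * F z := by
    ext a b
    simp only [F, Matrix.of_apply, Matrix.mul_apply, Matrix.star_apply,
      Matrix.conjTranspose_apply, Finset.sum_apply, Matrix.sum_apply]
    exact sum_flatten fun k s => star (z k (e.symm a).1 s (e.symm a).2)
      * z k (e.symm b).1 s (e.symm b).2
  obtain ⟨w, hw⟩ := hP (n * 2) (F (star z * z)) ⟨F z, hFmul⟩
  refine ⟨Matrix.of fun k i => Matrix.of fun s p => w (e (k, s)) (e (i, p)), ?_⟩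
  ext i j p q
  have key : ((F (star z * z)).map P) (e (i, p)) (e (j, q))
      = (star w * w) (e (i, p)) (e (j, q)) := by rw [hw]
  simp only [F, Matrix.map_apply, Matrix.of_apply, Equiv.symm_apply_apply] at key
  have h2 : T (x i j) = (star z * z) i j := by
    have h3 := congrFun (congrFun hz i) j
    simpa [Matrix.map_apply] using h3
  show P (T (x i j) p q) = _
  rw [h2, key]
  simp only [Matrix.mul_apply, Matrix.star_apply, Matrix.conjTranspose_apply,
    Finset.sum_apply, Matrix.sum_apply, Matrix.of_apply]
  exact (sum_flatten' fun l => star (w l (e (i, p))) * w l (e (j, q))).symm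

lemma contract' {B H : Type*} [CStarAlgebra B] [NormedAddCommGroup H]
    [InnerProductSpace ℂ H] [CompleteSpace H]
    (P : (H →L[ℂ] H) →ₗ[ℂ] B) (hP : IsCPMap P) (hP1 : P 1 = 1)
    {δ : H →L[ℂ] H} (hδ : IsSelfAdjoint δ) : ‖P δ‖ ≤ ‖δ‖ := by
  letI := CStarAlgebra.spectralOrder B
  haveI := CStarAlgebra.spectralOrderedRing B
  set r := ‖δ‖ with hr
  have h1 : (0 : H →L[ℂ] H) ≤ algebraMap ℝ _ r - δ :=
    sub_nonneg.mpr hδ.le_algebraMap_norm_self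
  have h2 : (0 : H →L[ℂ] H) ≤ algebraMap ℝ _ r + δ := by
    have h := hδ.neg_algebraMap_norm_le_self
    rw [neg_le] at h
    calc (0 : H →L[ℂ] H) = -δ + δ := by abel
    _ ≤ algebraMap ℝ _ r + δ := add_le_add_left h δ
  have sqrtrep : ∀ a : H →L[ℂ] H, 0 ≤ a → ∃ y, a = star y * y := fun a ha =>
    ⟨CFC.sqrt a, by
      rw [(IsSelfAdjoint.of_nonneg (CFC.sqrt_nonneg (a := a))).star_eq,
        CFC.sqrt_mul_sqrt_self a ha]⟩
  obtain ⟨y1, hy1⟩ := sqrtrep _ h1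
  obtain ⟨y2, hy2⟩ := sqrtrep _ h2
  have hPr : P (algebraMap ℝ (H →L[ℂ] H) r) = algebraMap ℝ B r := by
    rw [Algebra.algebraMap_eq_smul_one, Algebra.algebraMap_eq_smul_one,
      ← algebraMap_smul ℂ r (1 : H →L[ℂ] H), ← algebraMap_smul ℂ r (1 : B),
      map_smul, hP1]
  have p1 : 0 ≤ algebraMap ℝ B r - P δ := by
    have := hP.apply_nonneg' y1 hy1
    rwa [map_sub, hPr] at this
  have p2 : 0 ≤ algebraMap ℝ B r + P δ := by
    have := hP.apply_nonneg' y2 hy2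
    rwa [map_add, hPr] at this
  have hup : P δ ≤ algebraMap ℝ B r := sub_nonneg.mp p1
  have hlow : -algebraMap ℝ B r ≤ P δ := by
    rw [neg_le]
    calc -P δ = algebraMap ℝ B r - (algebraMap ℝ B r + P δ) := by abel
    _ ≤ algebraMap ℝ B r - 0 := by exact sub_le_sub_left p2 _
    _ = algebraMap ℝ B r := by abel
  have hsa : IsSelfAdjoint (P δ) := by
    have e1 : P δ = (algebraMap ℝ B r + P δ) - algebraMap ℝ B r := by abel
    rw [e1]
    refine (IsSelfAdjoint.of_nonneg p2).sub ?_
    rw [Algebra.algebraMap_eq_smul_one]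
    exact IsSelfAdjoint.smul (star_trivial r) (IsSelfAdjoint.one B)
  rcases subsingleton_or_nontrivial B with hB | hB
  · calc ‖P δ‖ = ‖(0 : B)‖ := by rw [Subsingleton.elim (P δ) 0]
    _ = 0 := norm_zero
    _ ≤ ‖δ‖ := norm_nonneg δ
  · rcases CStarAlgebra.norm_or_neg_norm_mem_spectrum hsa with h | h
    · exact (le_algebraMap_iff_spectrum_le hsa).mp hup _ h
    · rw [← map_neg (algebraMap ℝ B)] at hlow
      have := (algebraMap_le_iff_le_spectrum hsa).mp hlow _ h
      linarith

theorem stmt11 {A B : Type*} [CStarAlgebra A] [CStarAlgebra B]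
    {H : Type*} [NormedAddCommGroup H] [InnerProductSpace ℂ H] [CompleteSpace H]
    -- an isometric *-homomorphism `ι : B → B(H)`
    (ι : B →⋆ₐ[ℂ] (H →L[ℂ] H)) (hι : ∀ b : B, ‖ι b‖ = ‖b‖)
    -- a completely positive conditional expectation `P : B(H) → B` onto the image of `B`
    (P : (H →L[ℂ] H) →ₗ[ℂ] B) (hP : IsCPMap P) (hPι : ∀ b : B, P (ι b) = b)
    (T₁ T₂ : A →ₗ[ℂ] B) (hT₁ : IsCPMap T₁) (hT₂ : IsCPMap T₂) :
    buresDist (⇑T₁) (⇑T₂) = buresDist (fun a => ι (T₁ a)) (fun a => ι (T₂ a)) := by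
  set S₁ : Set ℝ := { r : ℝ | ∃ That : A →ₗ[ℂ] Matrix (Fin 2) (Fin 2) B,
    IsCPExtension (⇑T₁) (⇑T₂) That ∧ r = ‖T₁ 1 + T₂ 1 - That 1 0 1 - That 1 1 0‖ } with hS₁
  set S₂ : Set ℝ := { r : ℝ | ∃ That : A →ₗ[ℂ] Matrix (Fin 2) (Fin 2) (H →L[ℂ] H),
    IsCPExtension (fun a => ι (T₁ a)) (fun a => ι (T₂ a)) That ∧
      r = ‖(fun a => ι (T₁ a)) 1 + (fun a => ι (T₂ a)) 1 - That 1 0 1 - That 1 1 0‖ } with hS₂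
  have hone : (1 : A) = star 1 * 1 := by simp
  -- subset direction via pushforward by ι
  have hsub : S₁ ⊆ S₂ := by
    rintro r ⟨That, ⟨hcp, hd1, hd2⟩, rfl⟩
    refine ⟨{ toFun := fun a => (That a).map ι
              map_add' := fun a b => by ext i j; simp [Matrix.map_apply, map_add]
              map_smul' := fun c a => by ext i j; simp [Matrix.map_apply, map_smul] }, 
      ⟨?_, fun a => ?_, fun a => ?_⟩, ?_⟩
    · exact IsCPMap.mapHom' (RingHomClass.toRingHom ι) (fun b => map_star ι b) hcp
    · show ι (That a 0 0) = ι (T₁ a); rw [hd1]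
    · show ι (That a 1 1) = ι (T₂ a); rw [hd2]
    · show _ = ‖ι (T₁ 1) + ι (T₂ 1) - ι (That 1 0 1) - ι (That 1 1 0)‖
      rw [← map_add, ← map_sub, ← map_sub, hι]
  -- reverse direction via pullback by P
  have hle : ∀ r' ∈ S₂, ∃ r ∈ S₁, r ≤ r' := by
    rintro r' ⟨Shat, ⟨hcp, hd1, hd2⟩, rfl⟩
    refine ⟨‖T₁ 1 + T₂ 1 - P (Shat 1 0 1) - P (Shat 1 1 0)‖,
      ⟨{ toFun := fun a => (Shat a).map P
         map_add' := fun a b => by ext i j; simp [Matrix.map_apply, map_add]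
         map_smul' := fun c a => by ext i j; simp [Matrix.map_apply, map_smul] },
       ⟨?_, fun a => ?_, fun a => ?_⟩, rfl⟩, ?_⟩
    · exact IsCPMap.mapCP' P hP hcp
    · show P (Shat a 0 0) = T₁ a; rw [hd1]; exact hPι _
    · show P (Shat a 1 1) = T₂ a; rw [hd2]; exact hPι _
    · -- the norm estimate
      set δ : H →L[ℂ] H := ι (T₁ 1) + ι (T₂ 1) - Shat 1 0 1 - Shat 1 1 0 with hδdef
      have hSsa : star (Shat 1) = Shat 1 := hcp.star_apply_self' 1 hone
      have h10 : Shat 1 1 0 = star (Shat 1 0 1) := by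
        have := congrFun (congrFun hSsa 1) 0
        rw [← this]; rfl
      have hT1sa : star (T₁ 1) = T₁ 1 := hT₁.star_apply_self' 1 hone
      have hT2sa : star (T₂ 1) = T₂ 1 := hT₂.star_apply_self' 1 hone
      have hδ : IsSelfAdjoint δ := by
        rw [IsSelfAdjoint, hδdef]
        simp only [star_sub, star_add, ← map_star ι, hT1sa, hT2sa, h10, star_star]
        abel
      have hP1 : P 1 = 1 := by rw [← map_one ι, hPι]
      have hval : T₁ 1 + T₂ 1 - P (Shat 1 0 1) - P (Shat 1 1 0) = P δ := by
        rw [hδdef, map_sub, map_sub, map_add, hPι, hPι]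
      rw [hval]
      exact contract' P hP hP1 hδ
  have hbdd₁ : BddBelow S₁ := ⟨0, fun r hr => by obtain ⟨_, _, rfl⟩ := hr; positivity⟩
  have hbdd₂ : BddBelow S₂ := ⟨0, fun r hr => by obtain ⟨_, _, rfl⟩ := hr; positivity⟩
  unfold buresDist
  rw [← hS₁, ← hS₂]
  congr 1
  rcases S₁.eq_empty_or_nonempty with h1 | h1
  · have h2 : S₂ = ∅ := by
      rw [Set.eq_empty_iff_forall_notMem]
      intro r' hr'
      obtain ⟨r, hr, -⟩ := hle r' hr'
      rw [h1] at hr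
      exact hr
    rw [h1, h2]
  · have h2 : S₂.Nonempty := h1.mono hsub
    refine le_antisymm ?_ (csInf_le_csInf hbdd₂ h1 hsub)
    refine le_csInf h2 fun r' hr' => ?_
    obtain ⟨r, hr, hrr'⟩ := hle r' hr'
    exact (csInf_le hbdd₁ hr).trans hrr'
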